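/- Let (Ω, μ) be a finite measure space and r : ℝ × Ω → Ω a measurable map such that for every θ ∈ ℝ the map r_θ := r(θ, ·) is measure-preserving for μ. Let B ⊆ Ω be a measurable set, u : Ω → ℝ a nonnegative integrable function, M > 0, and ε ≥ 0. If for every q ∈ Ω with u(q) ≤ M the Lebesgue measure of {θ ∈ [0, 2π] : r_θ(q) ∈ B} is at most ε, then μ(B) ≤ (∫_Ω u dμ)/M + (ε/(2π)) · μ(Ω). -/

import Mathlib

open MeasureTheory
open scoped ENNReal

/-- Averaging plus Markov estimate: if `μ` is a finite measure preserved by each map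
`r θ := r (θ, ·)`, `u` is a nonnegative integrable function, and for every `q` with
`u q ≤ M` the set of angles `θ ∈ [0, 2π]` with `r (θ, q) ∈ B` has Lebesgue measure at
most `ε`, then `μ B ≤ (∫ u dμ)/M + (ε/(2π)) · μ(Ω)`. -/
theorem measure_le_of_rotation_average
    {Ω : Type*} [MeasurableSpace Ω] (μ : Measure Ω) [IsFiniteMeasure μ]
    (r : ℝ × Ω → Ω) (hr : Measurable r)
    (hrp : ∀ θ : ℝ, MeasurePreserving (fun q => r (θ, q)) μ μ)
    (B : Set Ω) (hB : MeasurableSet B)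
    (u : Ω → ℝ) (hu0 : ∀ q, 0 ≤ u q) (hu : Integrable u μ)
    (M : ℝ) (hM : 0 < M) (ε : ℝ) (hε : 0 ≤ ε)
    (h : ∀ q : Ω, u q ≤ M →
      volume {θ ∈ Set.Icc (0 : ℝ) (2 * Real.pi) | r (θ, q) ∈ B} ≤ ENNReal.ofReal ε) :
    (μ B).toReal ≤ (∫ q, u q ∂μ) / M + (ε / (2 * Real.pi)) * (μ Set.univ).toReal := by
  have hπ : (0:ℝ) < 2 * Real.pi := by positivity
  set ν : Measure ℝ := volume.restrict (Set.Icc 0 (2*Real.pi)) with hν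
  have hνuniv : ν Set.univ = ENNReal.ofReal (2 * Real.pi) := by
    rw [hν, Measure.restrict_apply MeasurableSet.univ, Set.univ_inter, Real.volume_Icc]
    norm_num
  have hνfin : IsFiniteMeasure ν := by
    constructor; rw [hνuniv]; exact ENNReal.ofReal_lt_top
  have hS : MeasurableSet (r ⁻¹' B) := hr hB
  -- measurability of the vertical fiber sets
  have hfib : ∀ q : Ω, MeasurableSet {θ : ℝ | r (θ, q) ∈ B} := fun q =>
    (hr.comp (measurable_id.prodMk measurable_const)) hB
  -- Tonelli
  have key : ENNReal.ofReal (2 * Real.pi) * μ B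
      = ∫⁻ q, ν {θ : ℝ | r (θ, q) ∈ B} ∂μ := by
    have hmeas : AEMeasurable (Function.uncurry fun θ q =>
        (r ⁻¹' B).indicator (1 : ℝ × Ω → ℝ≥0∞) (θ, q)) (ν.prod μ) := by
      exact ((measurable_one.indicator hS).comp measurable_id).aemeasurable
    have swap := lintegral_lintegral_swap (μ := ν) (ν := μ)
      (f := fun θ q => (r ⁻¹' B).indicator (1 : ℝ × Ω → ℝ≥0∞) (θ, q)) hmeas
    have L : ∫⁻ θ, ∫⁻ q, (r ⁻¹' B).indicator (1 : ℝ × Ω → ℝ≥0∞) (θ, q) ∂μ ∂ν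
        = ENNReal.ofReal (2 * Real.pi) * μ B := by
      have inner : ∀ θ : ℝ, ∫⁻ q, (r ⁻¹' B).indicator (1 : ℝ × Ω → ℝ≥0∞) (θ, q) ∂μ = μ B := by
        intro θ
        have : ∀ q, (r ⁻¹' B).indicator (1 : ℝ × Ω → ℝ≥0∞) (θ, q)
            = ((fun q => r (θ, q)) ⁻¹' B).indicator (1 : Ω → ℝ≥0∞) q := by
          intro q; by_cases hq : r (θ, q) ∈ B <;> simp [Set.indicator, hq]
        simp_rw [this]
        rw [lintegral_indicator_one ((hrp θ).measurable hB)]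
        exact (hrp θ).measure_preimage hB.nullMeasurableSet
      simp_rw [inner]
      rw [lintegral_const, hνuniv, mul_comm]
    have R : ∫⁻ q, ∫⁻ θ, (r ⁻¹' B).indicator (1 : ℝ × Ω → ℝ≥0∞) (θ, q) ∂ν ∂μ
        = ∫⁻ q, ν {θ : ℝ | r (θ, q) ∈ B} ∂μ := by
      refine lintegral_congr fun q => ?_
      have : ∀ θ : ℝ, (r ⁻¹' B).indicator (1 : ℝ × Ω → ℝ≥0∞) (θ, q)
          = ({θ : ℝ | r (θ, q) ∈ B}).indicator (1 : ℝ → ℝ≥0∞) θ := by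
        intro θ; by_cases hq : r (θ, q) ∈ B <;> simp [Set.indicator, hq]
      simp_rw [this]
      exact lintegral_indicator_one (hfib q)
    rw [← L, swap, R]
  -- a measurable modification of u
  obtain ⟨u', hu'meas, huu'⟩ := hu.aemeasurable
  set G : Set Ω := {q | M < u' q} with hG
  have hGmeas : MeasurableSet G := measurableSet_lt measurable_const hu'meas
  -- pointwise (a.e.) bound on the fiber measure
  have hbound : ∀ᵐ q ∂μ, ν {θ : ℝ | r (θ, q) ∈ B}
      ≤ ENNReal.ofReal ε + G.indicator (fun _ => ENNReal.ofReal (2 * Real.pi)) q := by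
    filter_upwards [huu'] with q hq
    by_cases hqM : u q ≤ M
    · have h1 : ν {θ : ℝ | r (θ, q) ∈ B} ≤ ENNReal.ofReal ε := by
        have := h q hqM
        rw [hν, Measure.restrict_apply (hfib q)]
        calc volume ({θ : ℝ | r (θ, q) ∈ B} ∩ Set.Icc 0 (2*Real.pi))
            = volume {θ ∈ Set.Icc (0:ℝ) (2*Real.pi) | r (θ, q) ∈ B} := by
              congr 1; ext θ; simp [Set.mem_inter_iff, and_comm]
          _ ≤ ENNReal.ofReal ε := this
      exact le_trans h1 (le_add_right le_rfl)
    · have hqG : q ∈ G := by simp [hG, ← hq, not_le.mp hqM]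
      have h2 : ν {θ : ℝ | r (θ, q) ∈ B} ≤ ENNReal.ofReal (2 * Real.pi) := by
        rw [← hνuniv]; exact measure_mono (Set.subset_univ _)
      calc ν {θ : ℝ | r (θ, q) ∈ B} ≤ ENNReal.ofReal (2 * Real.pi) := h2
        _ ≤ _ := by rw [Set.indicator_of_mem hqG]; exact le_add_left le_rfl
  -- integrate the bound
  have hint : ∫⁻ q, ν {θ : ℝ | r (θ, q) ∈ B} ∂μ
      ≤ ENNReal.ofReal ε * μ Set.univ + ENNReal.ofReal (2 * Real.pi) * μ G := by
    calc ∫⁻ q, ν {θ : ℝ | r (θ, q) ∈ B} ∂μ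
        ≤ ∫⁻ q, (ENNReal.ofReal ε
            + G.indicator (fun _ => ENNReal.ofReal (2 * Real.pi)) q) ∂μ :=
          lintegral_mono_ae hbound
      _ = ENNReal.ofReal ε * μ Set.univ + ENNReal.ofReal (2 * Real.pi) * μ G := by
          rw [lintegral_add_right _ ((measurable_const).indicator hGmeas),
            lintegral_const, lintegral_indicator_const hGmeas]
  -- Markov's inequality for μ G
  have hMarkov : μ G ≤ ENNReal.ofReal ((∫ q, u q ∂μ) / M) := by
    have markov := mul_meas_ge_le_lintegral₀ (μ := μ)
      (f := fun q => ENNReal.ofReal (u' q)) (hu'meas.ennreal_ofReal).aemeasurable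
      (ENNReal.ofReal M)
    have hsub : μ G ≤ μ {x | ENNReal.ofReal M ≤ ENNReal.ofReal (u' x)} := by
      apply measure_mono
      intro x hx
      exact ENNReal.ofReal_le_ofReal (le_of_lt hx)
    have hlint : ∫⁻ q, ENNReal.ofReal (u' q) ∂μ = ENNReal.ofReal (∫ q, u q ∂μ) := by
      have hcg : (fun q => ENNReal.ofReal (u' q)) =ᵐ[μ] fun q => ENNReal.ofReal (u q) :=
        huu'.mono fun q hq => by simp [hq]
      rw [lintegral_congr_ae hcg]
      exact (ofReal_integral_eq_lintegral_ofReal hu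
        (Filter.Eventually.of_forall hu0)).symm
    have h1 : ENNReal.ofReal M * μ G ≤ ENNReal.ofReal (∫ q, u q ∂μ) := by
      calc ENNReal.ofReal M * μ G
          ≤ ENNReal.ofReal M * μ {x | ENNReal.ofReal M ≤ ENNReal.ofReal (u' x)} :=
            by gcongr
        _ ≤ ∫⁻ q, ENNReal.ofReal (u' q) ∂μ := markov
        _ = ENNReal.ofReal (∫ q, u q ∂μ) := hlint
    rw [ENNReal.ofReal_div_of_pos hM]
    rw [ENNReal.le_div_iff_mul_le (by simp [hM]) (by simp)]
    rw [mul_comm] at h1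
    exact h1
  -- combine
  have main : ENNReal.ofReal (2 * Real.pi) * μ B
      ≤ ENNReal.ofReal ε * μ Set.univ
        + ENNReal.ofReal (2 * Real.pi) * ENNReal.ofReal ((∫ q, u q ∂μ) / M) := by
    rw [key]
    exact le_trans hint (by gcongr)
  -- pass to reals
  have hBfin : μ B ≠ ⊤ := measure_ne_top μ B
  have hUfin : μ Set.univ ≠ ⊤ := measure_ne_top μ _
  have hIpos : 0 ≤ ∫ q, u q ∂μ := integral_nonneg hu0
  have main' : 2 * Real.pi * (μ B).toReal
      ≤ ε * (μ Set.univ).toReal + 2 * Real.pi * ((∫ q, u q ∂μ) / M) := by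
    have := ENNReal.toReal_mono (by
        refine ENNReal.add_ne_top.mpr ⟨?_, ?_⟩
        · exact ENNReal.mul_ne_top ENNReal.ofReal_ne_top hUfin
        · exact ENNReal.mul_ne_top ENNReal.ofReal_ne_top ENNReal.ofReal_ne_top) main
    rw [ENNReal.toReal_add (ENNReal.mul_ne_top ENNReal.ofReal_ne_top hUfin)
        (ENNReal.mul_ne_top ENNReal.ofReal_ne_top ENNReal.ofReal_ne_top),
      ENNReal.toReal_mul, ENNReal.toReal_mul, ENNReal.toReal_mul,
      ENNReal.toReal_ofReal hπ.le, ENNReal.toReal_ofReal hε,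
      ENNReal.toReal_ofReal (by positivity)] at this
    exact this
  have hV : 0 ≤ (μ Set.univ).toReal := ENNReal.toReal_nonneg
  have hpi := Real.pi_pos
  have hπ' : (2 * Real.pi) ≠ 0 := hπ.ne'
  have h2 : (μ B).toReal ≤ (ε * (μ Set.univ).toReal
      + 2 * Real.pi * ((∫ q, u q ∂μ) / M)) / (2 * Real.pi) := by
    rw [le_div_iff₀ hπ]; linarith [main']
  have h3 : (ε * (μ Set.univ).toReal + 2 * Real.pi * ((∫ q, u q ∂μ) / M)) / (2 * Real.pi)
      = (∫ q, u q ∂μ) / M + ε / (2 * Real.pi) * (μ Set.univ).toReal := by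
    field_simp
    ring
  linarith [h2, h3.le, h3.ge]
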